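/- Let T be a {0,1}-valued random variable with P[T = 1] = p ∈ [0,1]. Then for all t ≥ 0, E[e^{−t(T − p)}] ≤ e^{t² p / 2}. -/

import Mathlib

open MeasureTheory

private lemma exp_neg_quad_bound {t : ℝ} (ht : 0 ≤ t) :
    Real.exp (-t) ≤ 1 - t + t ^ 2 / 2 := by
  have key : ∀ x ∈ Set.Ici (0 : ℝ),
      Real.exp (-x) - (1 - x + x ^ 2 / 2) ≤ 0 := by
    have hmono : ∀ x ∈ Set.Ici (0:ℝ),
        (fun y => Real.exp (-y) - (1 - y + y ^ 2 / 2)) x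
          ≤ (fun y => Real.exp (-y) - (1 - y + y ^ 2 / 2)) 0 := by
      intro x hx
      have hder : ∀ y : ℝ, HasDerivAt (fun y => Real.exp (-y) - (1 - y + y ^ 2 / 2))
          (-Real.exp (-y) - (-1 + y)) y := by
        intro y
        have h1 : HasDerivAt (fun y : ℝ => Real.exp (-y)) (-Real.exp (-y)) y := by
          exact ((Real.hasDerivAt_exp (-y)).comp y (hasDerivAt_neg y)).congr_deriv (by ring)
        have h2 : HasDerivAt (fun y : ℝ => 1 - y + y ^ 2 / 2) (-1 + y) y := by
          have := ((hasDerivAt_pow 2 y).div_const 2)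
          have h3 : HasDerivAt (fun y : ℝ => 1 - y) (-1) y := by
            simpa using (hasDerivAt_id y).const_sub (1:ℝ)
          exact (h3.add this).congr_deriv (by norm_num <;> ring)
        exact h1.sub h2
      have hanti : AntitoneOn (fun y => Real.exp (-y) - (1 - y + y ^ 2 / 2)) (Set.Ici 0) := by
        apply antitoneOn_of_deriv_nonpos (convex_Ici 0)
        · exact (Continuous.continuousOn (by continuity))
        · intro y hy
          exact ((hder y).differentiableAt).differentiableWithinAt
        · intro y hy
          rw [(hder y).deriv]
          have hy0 : (0:ℝ) < y := by simpa using hy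
          have := Real.add_one_le_exp (-y)
          nlinarith [Real.exp_pos (-y)]
      exact hanti (Set.self_mem_Ici) hx hx
    intro x hx
    have := hmono x hx
    simpa using this
  have := key t ht
  linarith

theorem stmt_17 {Ω : Type*} {m : MeasurableSpace Ω} (μ : Measure Ω) [IsProbabilityMeasure μ]
    (T : Ω → ℝ) (hTmeas : Measurable T) (hT01 : ∀ ω, T ω = 0 ∨ T ω = 1)
    (p : ℝ) (hp0 : 0 ≤ p) (hp1 : p ≤ 1) (hTp : μ {ω | T ω = 1} = ENNReal.ofReal p)
    (t : ℝ) (ht : 0 ≤ t) :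
    ∫ ω, Real.exp (-t * (T ω - p)) ∂μ ≤ Real.exp (t ^ 2 * p / 2) := by
  set A : Set Ω := {ω | T ω = 1} with hA_def
  have hA : MeasurableSet A := hTmeas (measurableSet_singleton 1)
  set c1 : ℝ := Real.exp (-t * (1 - p)) with hc1
  set c0 : ℝ := Real.exp (t * p) with hc0
  have hfun : (fun ω => Real.exp (-t * (T ω - p)))
      = fun ω => A.indicator (fun _ => c1) ω + Aᶜ.indicator (fun _ => c0) ω := by
    funext ω
    rcases hT01 ω with h0 | h1
    · have hωA : ω ∉ A := by simp [hA_def, h0]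
      simp [Set.indicator_of_notMem hωA, Set.indicator_of_mem (by simpa using hωA : ω ∈ Aᶜ),
        h0, hc0]
    · have hωA : ω ∈ A := by simp [hA_def, h1]
      simp [Set.indicator_of_mem hωA, Set.indicator_of_notMem (by simpa using hωA : ω ∉ Aᶜ),
        h1, hc1]
  rw [hfun]
  have hint1 : Integrable (A.indicator (fun _ => c1)) μ :=
    (integrable_const c1).indicator hA
  have hint0 : Integrable (Aᶜ.indicator (fun _ => c0)) μ :=
    (integrable_const c0).indicator hA.compl
  rw [integral_add hint1 hint0, integral_indicator_const _ hA, integral_indicator_const _ hA.compl]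
  have hμA : μ A = ENNReal.ofReal p := hTp
  have hμAc : μ Aᶜ = ENNReal.ofReal (1 - p) := by
    rw [prob_compl_eq_one_sub hA, hμA]
    rw [ENNReal.ofReal_sub 1 hp0]
    simp
  rw [measureReal_def, measureReal_def, hμA, hμAc, ENNReal.toReal_ofReal hp0, ENNReal.toReal_ofReal (by linarith)]
  simp only [smul_eq_mul]
  -- Now: p * c1 + (1 - p) * c0 ≤ exp (t ^ 2 * p / 2)
  have hc1' : c1 = c0 * Real.exp (-t) := by
    rw [hc1, hc0, ← Real.exp_add]; ring_nf
  rw [hc1']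
  have key1 : p * (c0 * Real.exp (-t)) + (1 - p) * c0
      = c0 * (1 + p * (Real.exp (-t) - 1)) := by ring
  rw [key1]
  have step1 : c0 * (1 + p * (Real.exp (-t) - 1))
      ≤ c0 * Real.exp (p * (Real.exp (-t) - 1)) := by
    apply mul_le_mul_of_nonneg_left _ (Real.exp_pos _).le
    have := Real.add_one_le_exp (p * (Real.exp (-t) - 1))
    linarith
  refine step1.trans ?_
  rw [hc0, ← Real.exp_add, Real.exp_le_exp]
  have hq := exp_neg_quad_bound ht
  nlinarith [sq_nonneg t]
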